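/- Every A-strict episturmian word over a finite alphabet A is fine: there exists an infinite word s such that for every letter a ∈ A and every total order on A with a = min(A), min(t) = a·s. -/

import Mathlib

/-- The prefix of length `k` of an infinite word `w : ℕ → A`. -/
def pref {A : Type*} (w : ℕ → A) (k : ℕ) : List A := (List.range k).map w

/-- `u` is a (finite) factor of the infinite word `w`. -/
def IsFactor {A : Type*} (w : ℕ → A) (u : List A) : Prop :=
  ∃ i : ℕ, u = (List.range u.length).map (fun j => w (i + j))

/-- Prepend a letter to an infinite word. -/
def consW {A : Type*} (a : A) (s : ℕ → A) : ℕ → A := fun n => match n with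
  | 0 => a
  | n + 1 => s n

/-- Concatenation of a finite word with an infinite word. -/
def catW {A : Type*} (u : List A) (w : ℕ → A) : ℕ → A := fun n =>
  if h : n < u.length then u.get ⟨n, h⟩ else w (n - u.length)

/-- `u` is the lexicographically smallest factor of `w` of length `k`,
w.r.t. the strict order `lt` on letters. -/
def IsMinFactor {A : Type*} (lt : A → A → Prop) (w : ℕ → A) (k : ℕ) (u : List A) : Prop :=
  IsFactor w u ∧ u.length = k ∧
    ∀ v, IsFactor w v → v.length = k → u = v ∨ List.Lex lt u v

/-- `u` is the lexicographically greatest factor of `w` of length `k`. -/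
def IsMaxFactor {A : Type*} (lt : A → A → Prop) (w : ℕ → A) (k : ℕ) (u : List A) : Prop :=
  IsFactor w u ∧ u.length = k ∧
    ∀ v, IsFactor w v → v.length = k → u = v ∨ List.Lex lt v u

/-- `m = min(w)`: every length-`k` prefix of `m` is the lexicographically
smallest factor of `w` of length `k`. -/
def IsMinWord {A : Type*} (lt : A → A → Prop) (w m : ℕ → A) : Prop :=
  ∀ k : ℕ, IsMinFactor lt w k (pref m k)

/-- `m = max(w)`. -/
def IsMaxWord {A : Type*} (lt : A → A → Prop) (w m : ℕ → A) : Prop :=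
  ∀ k : ℕ, IsMaxFactor lt w k (pref m k)

/-- The letter `z` is separating for `t`: every length-2 factor of `t` contains `z`. -/
def Separating {A : Type*} (z : A) (t : ℕ → A) : Prop :=
  ∀ u, IsFactor t u → u.length = 2 → z ∈ u

/-- The episturmian morphism `Ψ_z` on finite words: `z ↦ z`, `x ↦ zx` for `x ≠ z`. -/
def psiL {A : Type*} [DecidableEq A] (z : A) (u : List A) : List A :=
  u.flatMap (fun x => if x = z then [z] else [z, x])

/-- `t = Ψ_z(y)` for infinite words: the `Ψ_z`-image of every prefix of `y`
is a prefix of `t`. -/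
def PsiImage {A : Type*} [DecidableEq A] (z : A) (y t : ℕ → A) : Prop :=
  ∀ n : ℕ, psiL z (pref y n) = pref t (psiL z (pref y n)).length

/-- `u` is a left special factor of `w`. -/
def LeftSpecial {A : Type*} (w : ℕ → A) (u : List A) : Prop :=
  ∃ a b : A, a ≠ b ∧ IsFactor w (a :: u) ∧ IsFactor w (b :: u)

/-- `u` is a right special factor of `w`. -/
def RightSpecial {A : Type*} (w : ℕ → A) (u : List A) : Prop :=
  ∃ a b : A, a ≠ b ∧ IsFactor w (u ++ [a]) ∧ IsFactor w (u ++ [b])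

/-- `w` is a standard episturmian word: factors closed under reversal and
every left special factor is a prefix. -/
def StdEpisturmian {A : Type*} (w : ℕ → A) : Prop :=
  (∀ u, IsFactor w u → IsFactor w u.reverse) ∧
  (∀ u, LeftSpecial w u → u = pref w u.length)

/-- `w` is an `A`-strict standard episturmian word (standard Arnoux-Rauzy sequence):
standard episturmian and every prefix has every letter as a left extension. -/
def StrictStdEpisturmian {A : Type*} (w : ℕ → A) : Prop :=
  StdEpisturmian w ∧ ∀ (n : ℕ) (a : A), IsFactor w (a :: pref w n)

/-- `w` is episturmian: factors closed under reversal and at most one right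
special factor of each length. -/
def Episturmian {A : Type*} (w : ℕ → A) : Prop :=
  (∀ u, IsFactor w u → IsFactor w u.reverse) ∧
  (∀ u v, RightSpecial w u → RightSpecial w v → u.length = v.length → u = v)

/-- `w` is an `A`-strict episturmian word: it has the same set of factors as some
`A`-strict standard episturmian word. -/
def StrictEpisturmian {A : Type*} (w : ℕ → A) : Prop :=
  ∃ s : ℕ → A, StrictStdEpisturmian s ∧ ∀ u, IsFactor w u ↔ IsFactor s u

/-- `t` is fine: there is an infinite word `s` such that for every total order on the
alphabet and every letter `a` minimal for that order, `min(t) = a·s`. -/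
def Fine {A : Type*} (t : ℕ → A) : Prop :=
  ∃ s : ℕ → A, ∀ (l : LinearOrder A) (a : A), (∀ b, l.le a b) →
    IsMinWord l.lt t (consW a s)


namespace EpiAux

open List

variable {A : Type*}

/-! ### Basic API for prefixes and occurrences -/

@[simp] lemma pref_length (w : ℕ → A) (k : ℕ) : (pref w k).length = k := by
  simp [pref]

@[simp] lemma pref_getElem (w : ℕ → A) (k m : ℕ) (hm : m < (pref w k).length) :
    (pref w k)[m] = w m := by
  simp [pref]

@[simp] lemma pref_zero (w : ℕ → A) : pref w 0 = [] := rfl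

lemma pref_succ (w : ℕ → A) (k : ℕ) : pref w (k+1) = pref w k ++ [w k] := by
  simp [pref, List.range_succ]

/-- Occurrence of `u` in `w` at position `i`. -/
def FacAt (w : ℕ → A) (u : List A) (i : ℕ) : Prop :=
  ∀ m : ℕ, ∀ hm : m < u.length, u[m] = w (i + m)

lemma isFactor_iff {w : ℕ → A} {u : List A} : IsFactor w u ↔ ∃ i, FacAt w u i := by
  constructor
  · rintro ⟨i, hi⟩
    refine ⟨i, fun m hm => ?_⟩
    rw [List.getElem_of_eq hi hm]
    simp
  · rintro ⟨i, hi⟩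
    refine ⟨i, ?_⟩
    apply List.ext_getElem (by simp)
    intro m hm hm'
    simp only [List.getElem_map, List.getElem_range]
    exact hi m hm

lemma FacAt.isFactor {w : ℕ → A} {u : List A} {i : ℕ} (h : FacAt w u i) : IsFactor w u :=
  isFactor_iff.mpr ⟨i, h⟩

lemma facAt_nil (w : ℕ → A) (i : ℕ) : FacAt w ([] : List A) i := by
  intro m hm; simp at hm

lemma facAt_append {w : ℕ → A} {u v : List A} {i : ℕ} :
    FacAt w (u ++ v) i ↔ FacAt w u i ∧ FacAt w v (i + u.length) := by
  constructor
  · intro h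
    constructor
    · intro m hm
      have := h m (by simp; omega)
      rwa [List.getElem_append_left hm] at this
    · intro m hm
      have := h (u.length + m) (by simp; omega)
      rw [List.getElem_append_right (by omega)] at this
      simpa [Nat.add_assoc] using this
  · rintro ⟨h1, h2⟩ m hm
    simp only [List.length_append] at hm
    by_cases hc : m < u.length
    · rw [List.getElem_append_left hc]; exact h1 m hc
    · rw [List.getElem_append_right (by omega)]
      have := h2 (m - u.length) (by omega)
      rw [this]
      congr 1
      omega

lemma facAt_cons {w : ℕ → A} {x : A} {u : List A} {i : ℕ} :
    FacAt w (x :: u) i ↔ x = w i ∧ FacAt w u (i + 1) := by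
  constructor
  · intro h
    refine ⟨h 0 (by simp), fun m hm => ?_⟩
    have := h (m+1) (by simp; omega)
    simpa [Nat.add_assoc, Nat.add_comm 1 m] using this
  · rintro ⟨h0, h1⟩ m hm
    cases m with
    | zero => simpa using h0
    | succ m =>
      have := h1 m (by simpa using hm)
      simpa [Nat.add_assoc, Nat.add_comm 1 m] using this

lemma facAt_pref (w : ℕ → A) (k : ℕ) : FacAt w (pref w k) 0 := by
  intro m hm; simp

lemma isFactor_pref (w : ℕ → A) (k : ℕ) : IsFactor w (pref w k) :=
  (facAt_pref w k).isFactor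

lemma isFactor_nil (w : ℕ → A) : IsFactor w ([] : List A) := ⟨0, rfl⟩

lemma isFactor_append_left {w : ℕ → A} {u v : List A} (h : IsFactor w (u ++ v)) :
    IsFactor w u := by
  obtain ⟨i, hi⟩ := isFactor_iff.mp h
  exact (facAt_append.mp hi).1.isFactor

lemma isFactor_append_right {w : ℕ → A} {u v : List A} (h : IsFactor w (u ++ v)) :
    IsFactor w v := by
  obtain ⟨i, hi⟩ := isFactor_iff.mp h
  exact (facAt_append.mp hi).2.isFactor

lemma isFactor_of_cons {w : ℕ → A} {x : A} {u : List A} (h : IsFactor w (x :: u)) :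
    IsFactor w u := by
  obtain ⟨i, hi⟩ := isFactor_iff.mp h
  exact (facAt_cons.mp hi).2.isFactor

lemma facAt_extend_right {w : ℕ → A} {u : List A} {i : ℕ} (h : FacAt w u i) :
    FacAt w (u ++ [w (i + u.length)]) i := by
  rw [facAt_append]
  exact ⟨h, by intro m hm; simp at hm; subst hm; simp⟩

lemma pair_facAt (w : ℕ → A) (i : ℕ) : FacAt w [w i, w (i+1)] i := by
  intro m hm
  simp at hm
  match m, hm with
  | 0, _ => simp
  | 1, _ => simp


/-! ### The morphism psi and the block structure -/

open Classical in
/-- Our own copy of the episturmian morphism (classical decidability baked in). -/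
noncomputable def psi (z : A) (u : List A) : List A :=
  u.flatMap (fun x => if x = z then [z] else [z, x])

@[simp] lemma psi_nil (z : A) : psi z ([] : List A) = [] := rfl

lemma psi_cons_self (z : A) (u : List A) : psi z (z :: u) = z :: psi z u := by
  simp [psi]

lemma psi_cons_ne (z : A) {x : A} (hx : x ≠ z) (u : List A) :
    psi z (x :: u) = z :: x :: psi z u := by
  simp [psi, hx]

lemma psi_append (z : A) (u v : List A) : psi z (u ++ v) = psi z u ++ psi z v := by
  simp [psi]

lemma psi_single_self (z : A) : psi z [z] = [z] := by simpa using psi_cons_self z []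

lemma psi_single_ne (z : A) {x : A} (hx : x ≠ z) : psi z [x] = [z, x] := by
  simpa using psi_cons_ne z hx []

lemma psi_head (z x : A) (u : List A) : ∃ v, psi z (x :: u) = z :: v := by
  by_cases hx : x = z
  · exact ⟨psi z u, by rw [hx]; exact psi_cons_self z u⟩
  · exact ⟨x :: psi z u, psi_cons_ne z hx u⟩

open Classical in
/-- Starting positions of the blocks of `s` (s is supposed to start with `z` and
have `z` separating). -/
noncomputable def bs (s : ℕ → A) (z : A) : ℕ → ℕ
  | 0 => 0
  | k+1 => bs s z k + (if s (bs s z k + 1) = z then 1 else 2)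

/-- The derived (desubstituted) word. -/
noncomputable def ds (s : ℕ → A) (z : A) (k : ℕ) : A := s (bs s z k + 1)

variable {s : ℕ → A} {z : A}

@[simp] lemma bs_zero : bs s z 0 = 0 := rfl

lemma bs_succ_of_eq {k : ℕ} (h : s (bs s z k + 1) = z) :
    bs s z (k+1) = bs s z k + 1 := by
  simp [bs, h]

lemma bs_succ_of_ne {k : ℕ} (h : s (bs s z k + 1) ≠ z) :
    bs s z (k+1) = bs s z k + 2 := by
  simp [bs, h]

lemma bs_lt_succ (k : ℕ) : bs s z k < bs s z (k+1) := by
  by_cases h : s (bs s z k + 1) = z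
  · rw [bs_succ_of_eq h]; omega
  · rw [bs_succ_of_ne h]; omega

lemma bs_succ_le (k : ℕ) : bs s z (k+1) ≤ bs s z k + 2 := by
  by_cases h : s (bs s z k + 1) = z
  · rw [bs_succ_of_eq h]; omega
  · rw [bs_succ_of_ne h]

lemma le_bs (k : ℕ) : k ≤ bs s z k := by
  induction k with
  | zero => simp
  | succ k ih => have := bs_lt_succ (s := s) (z := z) k; omega

lemma s_bs (hz : s 0 = z) (hsep : ∀ i, s i = z ∨ s (i+1) = z) (k : ℕ) :
    s (bs s z k) = z := by
  induction k with
  | zero => exact hz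
  | succ k ih =>
      by_cases h : s (bs s z k + 1) = z
      · rw [bs_succ_of_eq h]; exact h
      · rw [bs_succ_of_ne h]
        rcases hsep (bs s z k + 1) with h' | h'
        · exact absurd h' h
        · exact h'

lemma exists_bracket (j : ℕ) : ∃ r, bs s z r ≤ j ∧ j < bs s z (r+1) := by
  induction j with
  | zero => exact ⟨0, le_refl _, bs_lt_succ 0⟩
  | succ j ih =>
      obtain ⟨r, h1, h2⟩ := ih
      by_cases hc : j + 1 < bs s z (r+1)
      · exact ⟨r, by omega, hc⟩
      · refine ⟨r+1, by omega, ?_⟩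
        have := bs_lt_succ (s := s) (z := z) (r+1)
        omega

lemma bs_classify (j : ℕ) :
    ∃ r, j = bs s z r ∨ (j = bs s z r + 1 ∧ s j ≠ z) := by
  obtain ⟨r, h1, h2⟩ := exists_bracket (s := s) (z := z) j
  by_cases hc : j = bs s z r
  · exact ⟨r, Or.inl hc⟩
  · have hle := bs_succ_le (s := s) (z := z) r
    have hj : j = bs s z r + 1 := by omega
    refine ⟨r, Or.inr ⟨hj, fun hjz => ?_⟩⟩
    have := bs_succ_of_eq (s := s) (z := z) (k := r) (by rwa [← hj])
    omega

lemma bs_surj_on_z {i : ℕ} (h : s i = z) : ∃ k, bs s z k = i := by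
  obtain ⟨r, hor⟩ := bs_classify (s := s) (z := z) i
  rcases hor with h1 | ⟨h1, h2⟩
  · exact ⟨r, h1.symm⟩
  · exact absurd h h2

lemma psi_pref_ds (hz : s 0 = z) (hsep : ∀ i, s i = z ∨ s (i+1) = z) :
    ∀ r, psi z (pref (ds s z) r) = pref s (bs s z r)
  | 0 => by simp
  | (r+1) => by
      rw [pref_succ, psi_append, psi_pref_ds hz hsep r]
      by_cases h : s (bs s z r + 1) = z
      · have hds : ds s z r = z := h
        rw [hds, psi_single_self, bs_succ_of_eq h, pref_succ,
          s_bs hz hsep]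
      · have hds : ds s z r = s (bs s z r + 1) := rfl
        have hne : ds s z r ≠ z := by rwa [hds]
        rw [psi_single_ne z hne, bs_succ_of_ne h, show bs s z r + 2 = (bs s z r + 1) + 1 by omega,
          pref_succ, pref_succ, s_bs hz hsep, List.append_assoc]
        simp [hds]

/-- `w` ends with a letter distinct from `z`. -/
def EndsNe (z : A) (w : List A) : Prop := ∃ w₀ y, w = w₀ ++ [y] ∧ y ≠ z

lemma endsNe_cons {x : A} {w : List A} (h : EndsNe z (x :: w)) (hw : w ≠ []) :
    EndsNe z w := by
  obtain ⟨w₀, y, hw', hy⟩ := h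
  cases w₀ with
  | nil =>
      simp at hw'
      exact absurd hw'.2 hw
  | cons x' w₀' =>
      simp only [List.cons_append, List.cons.injEq] at hw'
      exact ⟨w₀', y, hw'.2, hy⟩

lemma dfull (hz : s 0 = z) (hsep : ∀ i, s i = z ∨ s (i+1) = z) :
    ∀ (w : List A) (k : ℕ),
    FacAt s (psi z w) (bs s z k) →
    (s (bs s z k + (psi z w).length) = z ∨ EndsNe z w) →
    FacAt (ds s z) w k ∧ bs s z (k + w.length) = bs s z k + (psi z w).length := by
  intro w
  induction w with
  | nil => intro k _ _; exact ⟨facAt_nil _ _, by simp⟩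
  | cons x w' ih =>
      intro k hocc hend
      by_cases hx : x = z
      · rw [hx] at hocc hend ⊢
        rw [psi_cons_self] at hocc hend
        obtain ⟨h0, htail⟩ := facAt_cons.mp hocc
        have hnext : s (bs s z k + 1) = z := by
          cases w' with
          | nil =>
              rcases hend with h | h
              · simpa using h
              · obtain ⟨w₀, y, hw', hy⟩ := h
                cases w₀ with
                | nil =>
                    simp only [List.nil_append] at hw'
                    injection hw' with h1 _
                    exact absurd h1.symm hy
                | cons a b =>
                    simp only [List.cons_append] at hw'
                    injection hw' with _ h2
                    exact absurd h2.symm (by simp)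
          | cons x' w'' =>
              obtain ⟨v, hv⟩ := psi_head z x' w''
              rw [hv] at htail
              have h0' := (facAt_cons.mp htail).1
              exact h0'.symm
        have hb : bs s z (k+1) = bs s z k + 1 := bs_succ_of_eq hnext
        have hds : ds s z k = z := hnext
        have hocc' : FacAt s (psi z w') (bs s z (k+1)) := by rw [hb]; exact htail
        have hend' : s (bs s z (k+1) + (psi z w').length) = z ∨ EndsNe z w' := by
          by_cases hw' : w' = []
          · subst hw'; left; simpa [hb] using s_bs hz hsep (k+1)
          · rcases hend with h | h
            · left
              simp only [List.length_cons] at h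
              rw [hb]
              convert h using 2
              omega
            · right; exact endsNe_cons h hw'
        obtain ⟨hf, hlen⟩ := ih (k+1) hocc' hend'
        refine ⟨facAt_cons.mpr ⟨hds.symm, hf⟩, ?_⟩
        have hps : (psi z (z :: w')).length = (psi z w').length + 1 := by
          rw [psi_cons_self]; simp
        have hidx : k + (z :: w').length = (k+1) + w'.length := by
          simp only [List.length_cons]; omega
        rw [hidx, hlen, hb, hps]
        omega
      · rw [psi_cons_ne z hx] at hocc hend
        obtain ⟨h0, htail0⟩ := facAt_cons.mp hocc
        obtain ⟨h1, htail⟩ := facAt_cons.mp htail0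
        have hnext : s (bs s z k + 1) ≠ z := by rw [← h1]; exact hx
        have hb : bs s z (k+1) = bs s z k + 2 := bs_succ_of_ne hnext
        have hds : ds s z k = x := h1.symm
        have hocc' : FacAt s (psi z w') (bs s z (k+1)) := by
          have he2 : bs s z k + 2 = bs s z k + 1 + 1 := by omega
          rw [hb, he2]; exact htail
        have hend' : s (bs s z (k+1) + (psi z w').length) = z ∨ EndsNe z w' := by
          by_cases hw' : w' = []
          · subst hw'; left; simpa [hb] using s_bs hz hsep (k+1)
          · rcases hend with h | h
            · left
              simp only [List.length_cons] at h
              rw [hb]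
              convert h using 2
              omega
            · right; exact endsNe_cons h hw'
        obtain ⟨hf, hlen⟩ := ih (k+1) hocc' hend'
        refine ⟨facAt_cons.mpr ⟨hds.symm, hf⟩, ?_⟩
        have hps : (psi z (x :: w')).length = (psi z w').length + 2 := by
          rw [psi_cons_ne z hx]; simp
        have hidx : k + (x :: w').length = (k+1) + w'.length := by
          simp only [List.length_cons]; omega
        rw [hidx, hlen, hb, hps]
        omega

lemma encode (hz : s 0 = z) (hsep : ∀ i, s i = z ∨ s (i+1) = z) :
    ∀ (w : List A) (k : ℕ), FacAt (ds s z) w k →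
    FacAt s (psi z w) (bs s z k) ∧ bs s z (k + w.length) = bs s z k + (psi z w).length := by
  intro w
  induction w with
  | nil => intro k _; exact ⟨facAt_nil _ _, by simp⟩
  | cons x w' ih =>
      intro k hocc
      obtain ⟨h0, htail⟩ := facAt_cons.mp hocc
      have hx : x = s (bs s z k + 1) := h0
      obtain ⟨hf, hlen⟩ := ih (k+1) htail
      by_cases h : s (bs s z k + 1) = z
      · have hxz : x = z := by rw [hx, h]
        rw [hxz]
        have hb : bs s z (k+1) = bs s z k + 1 := bs_succ_of_eq h
        rw [psi_cons_self]
        constructor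
        · refine facAt_cons.mpr ⟨(s_bs hz hsep k).symm, ?_⟩
          rw [← hb]; exact hf
        · simp only [List.length_cons]
          have hidx : k + (w'.length + 1) = (k+1) + w'.length := by omega
          rw [hidx, hlen, hb]
          omega
      · have hxz : x ≠ z := by rw [hx]; exact h
        have hb : bs s z (k+1) = bs s z k + 2 := bs_succ_of_ne h
        rw [psi_cons_ne z hxz]
        constructor
        · refine facAt_cons.mpr ⟨(s_bs hz hsep k).symm, facAt_cons.mpr ⟨hx, ?_⟩⟩
          have : bs s z k + 1 + 1 = bs s z (k+1) := by omega
          rw [this]; exact hf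
        · simp only [List.length_cons]
          have hidx : k + (w'.length + 1) = (k+1) + w'.length := by omega
          rw [hidx, hlen, hb]
          omega

lemma encode_factor (hz : s 0 = z) (hsep : ∀ i, s i = z ∨ s (i+1) = z)
    {v : List A} (h : IsFactor (ds s z) v) : IsFactor s (psi z v ++ [z]) := by
  obtain ⟨k, hk⟩ := isFactor_iff.mp h
  obtain ⟨hf, hlen⟩ := encode hz hsep v k hk
  have := facAt_extend_right hf
  have hzz : s (bs s z k + (psi z v).length) = z := by
    rw [← hlen]; exact s_bs hz hsep _
  rw [hzz] at this
  exact this.isFactor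

lemma eq_pref_of_facAt_zero {w : ℕ → A} {u : List A} (h : FacAt w u 0) :
    u = pref w u.length := by
  apply List.ext_getElem (by simp)
  intro m hm hm'
  rw [pref_getElem]
  simpa using h m hm

lemma decode_factor (hz : s 0 = z) (hsep : ∀ i, s i = z ∨ s (i+1) = z)
    {v : List A} (h : IsFactor s (psi z v ++ [z])) : IsFactor (ds s z) v := by
  cases v with
  | nil => exact isFactor_nil _
  | cons x v' =>
      obtain ⟨i, hi⟩ := isFactor_iff.mp h
      obtain ⟨u0, hu0⟩ := psi_head z x v'
      rw [hu0, List.cons_append] at hi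
      have hsi : s i = z := by
        simpa using (facAt_cons.mp hi).1.symm
      rw [← List.cons_append, ← hu0] at hi
      obtain ⟨k, hk⟩ := bs_surj_on_z (s := s) (z := z) hsi
      subst hk
      obtain ⟨hf1, hf2⟩ := facAt_append.mp hi
      have hzz : s (bs s z k + (psi z (x :: v')).length) = z := by
        have := hf2 0 (by simp)
        simpa using this.symm
      exact (dfull hz hsep (x :: v') k hf1 (Or.inl hzz)).1.isFactor

lemma decode_pref (hz : s 0 = z) (hsep : ∀ i, s i = z ∨ s (i+1) = z)
    {v : List A} (h : FacAt s (psi z v ++ [z]) 0) : v = pref (ds s z) v.length := by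
  obtain ⟨hf1, hf2⟩ := facAt_append.mp h
  have h0 : (0 : ℕ) = bs s z 0 := rfl
  rw [h0] at hf1
  have hzz : s (bs s z 0 + (psi z v).length) = z := by
    have := hf2 0 (by simp)
    simpa using this.symm
  exact eq_pref_of_facAt_zero (dfull hz hsep v 0 hf1 (Or.inl hzz)).1

lemma decode_noend (hz : s 0 = z) (hsep : ∀ i, s i = z ∨ s (i+1) = z)
    {v : List A} {c : A} (hc : c ≠ z) (hv : EndsNe z v)
    (h : IsFactor s (psi z v ++ [c])) : False := by
  obtain ⟨i, hi⟩ := isFactor_iff.mp h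
  obtain ⟨w₀, y, hveq, hy⟩ := hv
  have hvne : v ≠ [] := by rw [hveq]; simp
  obtain ⟨x, v', hxv⟩ := List.exists_cons_of_ne_nil hvne
  obtain ⟨u0, hu0⟩ := psi_head z x v'
  rw [hxv, hu0, List.cons_append] at hi
  have hsi : s i = z := by
    simpa using (facAt_cons.mp hi).1.symm
  rw [← List.cons_append, ← hu0, ← hxv] at hi
  obtain ⟨k, hk⟩ := bs_surj_on_z (s := s) (z := z) hsi
  subst hk
  obtain ⟨hf1, hf2⟩ := facAt_append.mp hi
  obtain ⟨_, hlen⟩ := dfull hz hsep v k hf1 (Or.inr ⟨w₀, y, hveq, hy⟩)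
  have hcz : c = s (bs s z k + (psi z v).length) := by simpa using hf2 0 (by simp)
  rw [← hlen, s_bs hz hsep] at hcz
  exact hc hcz



/-! ### Strict standard episturmian machinery -/

lemma pref_one (w : ℕ → A) : pref w 1 = [w 0] := by
  rfl

lemma sep_of_strict {s : ℕ → A} (hs : StrictStdEpisturmian s) (i : ℕ) :
    s i = s 0 ∨ s (i+1) = s 0 := by
  by_contra hcon
  push_neg at hcon
  obtain ⟨hx, hy⟩ := hcon
  have hfac : IsFactor s [s i, s (i+1)] := (pair_facAt s i).isFactor
  have h1 : IsFactor s ((s (i+1)) :: pref s 1) := hs.2 1 _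
  have h1' : IsFactor s [s 0, s (i+1)] := by
    have := hs.1.1 _ h1
    rw [pref_one] at this
    simpa using this
  have hls : LeftSpecial s [s (i+1)] := ⟨s i, s 0, hx, hfac, h1'⟩
  have := hs.1.2 _ hls
  rw [List.length_singleton, pref_one] at this
  exact hy (by injection this)

lemma fac_ext_right_z {s : ℕ → A} {z : A}
    (hsep : ∀ i, s i = z ∨ s (i+1) = z) {u : List A} {y : A}
    (h : IsFactor s (u ++ [y])) (hy : y ≠ z) :
    IsFactor s (u ++ [y] ++ [z]) := by
  obtain ⟨i, hi⟩ := isFactor_iff.mp h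
  have hyy : y = s (i + u.length) := by
    have := (facAt_append.mp hi).2
    simpa using (facAt_cons.mp this).1
  have hnz : s (i + u.length + 1) = z := by
    rcases hsep (i + u.length) with h' | h'
    · exact absurd h' (by rw [← hyy]; exact hy)
    · exact h'
  have := facAt_extend_right hi
  have hlen : i + (u ++ [y]).length = i + u.length + 1 := by simp; omega
  rw [hlen, hnz] at this
  exact this.isFactor

lemma fac_ext_left_z {s : ℕ → A} {z : A} (hz : s 0 = z)
    (hsep : ∀ i, s i = z ∨ s (i+1) = z) {x : A} {u : List A}
    (h : IsFactor s (x :: u)) (hx : x ≠ z) :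
    IsFactor s (z :: x :: u) := by
  obtain ⟨i, hi⟩ := isFactor_iff.mp h
  cases i with
  | zero =>
      have hthis := (facAt_cons.mp hi).1
      exact absurd (by rw [hthis]; exact hz) hx
  | succ i' =>
      have hsi : s i' = z := by
        rcases hsep i' with h' | h'
        · exact h'
        · have hx1 : x = s (i' + 1) := by simpa using (facAt_cons.mp hi).1
          exact absurd (by rw [hx1]; exact h') hx
      refine (facAt_cons.mpr ⟨hsi.symm, ?_⟩).isFactor
      have : i' + 1 = i' + 1 := rfl
      exact hi

lemma rev_psi (z : A) (v : List A) :
    z :: (psi z v).reverse = psi z v.reverse ++ [z] := by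
  induction v with
  | nil => simp
  | cons x v' ih =>
      by_cases hx : x = z
      · rw [hx, psi_cons_self, List.reverse_cons, List.reverse_cons, psi_append,
          psi_single_self]
        rw [show z :: ((psi z v').reverse ++ [z]) = (z :: (psi z v').reverse) ++ [z] from rfl, ih]
      · rw [psi_cons_ne z hx, List.reverse_cons, List.reverse_cons, List.reverse_cons,
          psi_append, psi_single_ne z hx]
        rw [show z :: ((psi z v').reverse ++ [x] ++ [z]) = (z :: (psi z v').reverse) ++ ([x] ++ [z]) from by simp, ih]
        simp

lemma derived_strict {s : ℕ → A} (hs : StrictStdEpisturmian s) :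
    StrictStdEpisturmian (ds s (s 0)) := by
  have hz : s 0 = s 0 := rfl
  set z := s 0 with hzd
  have hsep : ∀ i, s i = z ∨ s (i+1) = z := sep_of_strict hs
  refine ⟨⟨?_, ?_⟩, ?_⟩
  · intro v hv
    have h1 := encode_factor hz hsep hv
    have h2 := hs.1.1 _ h1
    have h2' : IsFactor s (z :: (psi z v).reverse) := by
      rw [List.reverse_append] at h2
      simpa using h2
    rw [rev_psi] at h2'
    exact decode_factor hz hsep h2'
  · intro v hlsv
    obtain ⟨a', b', hab, ha', hb'⟩ := hlsv
    have key : ∀ x : A, IsFactor (ds s z) (x :: v) → IsFactor s (x :: (psi z v ++ [z])) := by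
      intro x hx
      have h1 := encode_factor hz hsep hx
      by_cases hxz : x = z
      · rw [hxz]
        rw [hxz, psi_cons_self] at h1
        rw [List.cons_append] at h1
        exact h1
      · rw [psi_cons_ne z hxz, List.cons_append, List.cons_append] at h1
        exact isFactor_of_cons h1
    have hls : LeftSpecial s (psi z v ++ [z]) := ⟨a', b', hab, key a' ha', key b' hb'⟩
    have hp := hs.1.2 _ hls
    have hfa : FacAt s (psi z v ++ [z]) 0 := by
      rw [hp]; exact facAt_pref _ _
    exact decode_pref hz hsep hfa
  · intro n x
    have hP : psi z (pref (ds s z) n) = pref s (bs s z n) := psi_pref_ds hz hsep n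
    have h1 := hs.2 (bs s z n + 1) x
    have hpref : pref s (bs s z n + 1) = psi z (pref (ds s z) n) ++ [z] := by
      rw [pref_succ, hP, s_bs hz hsep]
    rw [hpref] at h1
    by_cases hxz : x = z
    · rw [hxz] at h1 ⊢
      apply decode_factor hz hsep
      rw [psi_cons_self, List.cons_append]
      exact h1
    · have h2 := fac_ext_left_z hz hsep h1 hxz
      apply decode_factor hz hsep
      rw [psi_cons_ne z hxz, List.cons_append, List.cons_append]
      exact h2



/-! ### Decoding helper and the key lemma -/

lemma psi_fac_ext {s : ℕ → A} {z : A} (hz : s 0 = z)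
    (hsep : ∀ i, s i = z ∨ s (i+1) = z) {w : List A} {c : A} (hcz : c ≠ z)
    (h : IsFactor s (psi z (w ++ [c]))) : IsFactor (ds s z) (w ++ [c]) := by
  have hshape : psi z (w ++ [c]) = (psi z w ++ [z]) ++ [c] := by
    rw [psi_append, psi_single_ne z hcz]
    simp
  rw [hshape] at h
  have h2 := fac_ext_right_z hsep h hcz
  apply decode_factor hz hsep
  rw [hshape]
  exact h2

lemma crux [lo : LinearOrder A] {a : A} (ha : ∀ b, a ≤ b) :
    ∀ j : ℕ, ∀ s : ℕ → A, StrictStdEpisturmian s → ∀ c : A, c ≠ s j →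
      IsFactor s (a :: (pref s j ++ [c])) → s j < c := by
  intro j
  induction j using Nat.strong_induction_on with
  | _ j IH =>
  intro s hs c hc hf
  rcases Nat.eq_zero_or_pos j with hj0 | hjpos
  · subst hj0
    simp only [pref_zero, List.nil_append] at hf
    obtain ⟨i, hi⟩ := isFactor_iff.mp hf
    have hA : a = s i := (facAt_cons.mp hi).1
    have hC : c = s (i+1) := by
      have := (facAt_cons.mp (facAt_cons.mp hi).2).1
      simpa using this
    rcases sep_of_strict hs i with h' | h'
    · have haz : a = s 0 := by rw [hA, h']
      exact lt_of_le_of_ne (haz ▸ ha c) (Ne.symm hc)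
    · exact absurd (by rw [hC, h']) hc
  · have hz : s 0 = s 0 := rfl
    set z := s 0 with hzd
    have hsep : ∀ i, s i = z ∨ s (i+1) = z := sep_of_strict hs
    have hds : StrictStdEpisturmian (ds s z) := derived_strict hs
    obtain ⟨r, hcls⟩ := bs_classify (s := s) (z := z) j
    rcases hcls with hbr | ⟨hbr, hjnz⟩
    · -- Case II : j = bs r, s j = z
      have hsj : s j = z := by rw [hbr]; exact s_bs hz hsep r
      have hcz : c ≠ z := by rw [← hsj]; exact hc
      by_cases haz : a = z
      · rw [hsj]
        exact lt_of_le_of_ne (haz ▸ ha c) (Ne.symm hcz)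
      · have hr1 : 1 ≤ r := by
          rcases Nat.eq_zero_or_pos r with h0 | h1
          · rw [h0] at hbr; simp at hbr; omega
          · exact h1
        have hP : pref s j = psi z (pref (ds s z) r) := by
          rw [hbr, ← psi_pref_ds hz hsep]
        have hf2 : IsFactor s (z :: a :: (pref s j ++ [c])) := fac_ext_left_z hz hsep hf haz
        obtain ⟨r', hr'⟩ : ∃ r', r = r' + 1 := ⟨r - 1, by omega⟩
        by_cases hyz : ds s z r' = z
        · -- decode a :: pref ds r' ++ [c]
          have hshape : z :: a :: (pref s j ++ [c])
              = psi z ((a :: pref (ds s z) r') ++ [c]) := by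
            rw [psi_append, psi_cons_ne z haz, psi_single_ne z hcz, hP, hr', pref_succ,
              psi_append, hyz, psi_single_self]
            simp
          rw [hshape] at hf2
          have hfds := psi_fac_ext hz hsep hcz hf2
          have hcy : c ≠ ds s z r' := by rw [hyz]; exact hcz
          have hlt := IH r' (by
              have := le_bs (s := s) (z := z) r
              omega) (ds s z) hds c hcy (by
              simpa using hfds)
          rw [hsj, ← hyz]
          exact hlt
        · -- impossible
          exfalso
          have hshape : z :: a :: (pref s j ++ [c])
              = psi z (a :: pref (ds s z) r) ++ [c] := by
            rw [psi_cons_ne z haz, hP]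
            simp
          rw [hshape] at hf2
          refine decode_noend hz hsep hcz ⟨a :: pref (ds s z) r', ds s z r', ?_, hyz⟩ hf2
          rw [hr', pref_succ]
          simp
    · -- Case I : j = bs r + 1, s j ≠ z
      have hdr : ds s z r = s j := by rw [hbr]; rfl
      have hP : pref s j = psi z (pref (ds s z) r) ++ [z] := by
        rw [hbr, pref_succ, psi_pref_ds hz hsep, s_bs hz hsep]
      have hrj : r < j := by
        have := le_bs (s := s) (z := z) r
        omega
      by_cases haz : a = z
      · by_cases hcz : c = z
        · -- decode (z :: pref ds r) ++ [z] , extra [z]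
          have hshape : a :: (pref s j ++ [c])
              = psi z ((z :: pref (ds s z) r) ++ [z]) ++ [z] := by
            rw [psi_append, psi_cons_self, psi_single_self, hP, haz, hcz]
            simp
          rw [hshape] at hf
          have hfds := decode_factor hz hsep hf
          have hzc : (z : A) ≠ ds s z r := by rw [hdr]; exact fun heq => hjnz heq.symm
          have hlt := IH r hrj (ds s z) hds z hzc (by rw [haz]; exact hfds)
          rw [← hdr, hcz]
          exact hlt
        · have hshape : a :: (pref s j ++ [c])
              = psi z ((z :: pref (ds s z) r) ++ [c]) := by
            rw [psi_append, psi_cons_self, psi_single_ne z hcz, hP, haz]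
            simp
          rw [hshape] at hf
          have hfds := psi_fac_ext hz hsep hcz hf
          have hcy : c ≠ ds s z r := by rw [hdr]; exact hc
          have hlt := IH r hrj (ds s z) hds c hcy (by
            have : (z :: pref (ds s z) r) ++ [c] = z :: (pref (ds s z) r ++ [c]) := by simp
            rw [this] at hfds
            rwa [haz])
          rw [← hdr]
          exact hlt
      · have hf2 : IsFactor s (z :: a :: (pref s j ++ [c])) := fac_ext_left_z hz hsep hf haz
        by_cases hcz : c = z
        · have hshape : z :: a :: (pref s j ++ [c])
              = psi z ((a :: pref (ds s z) r) ++ [z]) ++ [z] := by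
            rw [psi_append, psi_cons_ne z haz, psi_single_self, hP, hcz]
            simp
          rw [hshape] at hf2
          have hfds := decode_factor hz hsep hf2
          have hzc : (z : A) ≠ ds s z r := by rw [hdr]; exact fun heq => hjnz heq.symm
          have hlt := IH r hrj (ds s z) hds z hzc (by simpa using hfds)
          rw [← hdr, hcz]
          exact hlt
        · have hshape : z :: a :: (pref s j ++ [c])
              = psi z ((a :: pref (ds s z) r) ++ [c]) := by
            rw [psi_append, psi_cons_ne z haz, psi_single_ne z hcz, hP]
            simp
          rw [hshape] at hf2
          have hfds := psi_fac_ext hz hsep hcz hf2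
          have hcy : c ≠ ds s z r := by rw [hdr]; exact hc
          have hlt := IH r hrj (ds s z) hds c hcy (by simpa using hfds)
          rw [← hdr]
          exact hlt



/-! ### Lexicographic tools and the main argument -/

lemma lex_of_diff {r : A → A → Prop} :
    ∀ (j : ℕ) (X Y : List A) (hX : j < X.length) (hY : j < Y.length),
      (∀ i (h1 : i < X.length) (h2 : i < Y.length), i < j → X[i] = Y[i]) →
      r (X[j]'hX) (Y[j]'hY) → List.Lex r X Y := by
  intro j
  induction j with
  | zero =>
      intro X Y hX hY _ hr
      match X, Y with
      | x :: X', y :: Y' => exact List.Lex.rel (by simpa using hr)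
  | succ j ih =>
      intro X Y hX hY heq hr
      match X, Y with
      | x :: X', y :: Y' =>
        have h0 : x = y := heq 0 (by simp) (by simp) (by omega)
        subst h0
        apply List.Lex.cons
        apply ih X' Y' (by simpa using hX) (by simpa using hY)
        · intro i h1 h2 hij
          exact heq (i+1) (by simpa using h1) (by simpa using h2) (by omega)
        · simpa using hr

lemma exists_diff (X : List A) : ∀ (Y : List A), X.length = Y.length →
    X = Y ∨ ∃ j, ∃ (hX : j < X.length) (hY : j < Y.length),
      (∀ i (h1 : i < X.length) (h2 : i < Y.length), i < j → X[i] = Y[i]) ∧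
        X[j]'hX ≠ Y[j]'hY := by
  induction X with
  | nil =>
      intro Y hlen
      left
      cases Y with
      | nil => rfl
      | cons y Y' => simp at hlen
  | cons x X' ih =>
      intro Y hlen
      cases Y with
      | nil => simp at hlen
      | cons y Y' =>
          by_cases hxy : x = y
          · rcases ih Y' (by simpa using hlen) with heq | ⟨j, h1, h2, hpre, hne⟩
            · left; rw [hxy, heq]
            · right
              refine ⟨j+1, by simpa using Nat.succ_lt_succ h1, by simpa using Nat.succ_lt_succ h2, ?_, ?_⟩
              · intro i hi1 hi2 hij
                cases i with
                | zero => simpa using hxy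
                | succ i' =>
                    simpa using hpre i' (by simpa using hi1) (by simpa using hi2) (by omega)
              · simpa using hne
          · right
            exact ⟨0, by simp, by simp, fun i _ _ h => by omega, by simpa using hxy⟩

lemma min_factor [lo : LinearOrder A] {a : A} (ha : ∀ b, a ≤ b) {s : ℕ → A}
    (hs : StrictStdEpisturmian s) (n : ℕ) {v : List A} (hv : IsFactor s v)
    (hlen : v.length = n + 1) :
    a :: pref s n = v ∨ List.Lex (fun x y => x < y) (a :: pref s n) v := by
  match v with
  | b :: w =>
  have hw : w.length = n := by simpa using hlen
  by_cases hab : a = b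
  · rcases exists_diff (pref s n) w (by simp [hw]) with heq | ⟨j, hX, hY, hpre, hne⟩
    · left; rw [hab, heq]
    · right
      have hj : j < n := by simpa using hX
      have hwi : ∀ i, i < j → ∀ hi : i < w.length, w[i] = s i := by
        intro i hij hi
        have := hpre i (by simp; omega) hi hij
        rw [pref_getElem] at this
        exact this.symm
      -- the crucial factor
      have htake : w.take (j+1) = pref s j ++ [w[j]'hY] := by
        apply List.ext_getElem
        · simp [hw]; omega
        · intro m hm1 hm2
          rw [List.getElem_take]
          rcases Nat.lt_or_ge m j with hmj | hmj
          · rw [List.getElem_append_left (by simpa using hmj)]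
            rw [pref_getElem]
            exact hwi m hmj (by omega)
          · have hmj' : m = j := by
              simp at hm2
              omega
            subst hmj'
            rw [List.getElem_append_right (by simp)]
            simp
      have hsplit : b :: w = (a :: (pref s j ++ [w[j]'hY])) ++ w.drop (j+1) := by
        rw [← htake, List.cons_append, List.take_append_drop, hab]
      have hfcrux : IsFactor s (a :: (pref s j ++ [w[j]'hY])) := by
        rw [hsplit] at hv
        exact isFactor_append_left hv
      have hcne : w[j]'hY ≠ s j := by
        intro heq
        apply hne
        rw [pref_getElem, heq]
      have hlt := crux ha j s hs (w[j]'hY) hcne hfcrux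
      apply lex_of_diff (j+1) (a :: pref s n) (b :: w)
        (by simp; omega) (by simp [hw]; omega)
      · intro i h1 h2 hij
        cases i with
        | zero => simpa using hab
        | succ i' =>
            have hij' : i' < j := by omega
            simp only [List.getElem_cons_succ]
            rw [pref_getElem]
            exact (hwi i' hij' (by simp at h2; omega)).symm
      · simpa using hlt
  · right
    exact List.Lex.rel (lt_of_le_of_ne (ha b) hab)

lemma pref_consW (a : A) (s : ℕ → A) (n : ℕ) :
    pref (consW a s) (n+1) = a :: pref s n := by
  apply List.ext_getElem (by simp)
  intro m hm hm'
  cases m with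
  | zero => rw [pref_getElem]; rfl
  | succ m' =>
      rw [pref_getElem]
      simp only [List.getElem_cons_succ]
      rw [pref_getElem]
      rfl


end EpiAux

/-- Every `A`-strict episturmian word is fine. -/
theorem stmt_9 {A : Type*} [Fintype A] (t : ℕ → A) (h : StrictEpisturmian t) :
    Fine t := by
  open EpiAux in
  obtain ⟨s, hs, hfac⟩ := h
  refine ⟨s, ?_⟩
  intro l a ha
  letI := l
  intro k
  cases k with
  | zero =>
      refine ⟨EpiAux.isFactor_nil t, by simp, ?_⟩
      intro v hv hvlen
      left
      rw [List.length_eq_zero_iff] at hvlen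
      rw [hvlen]
      rfl
  | succ n =>
      rw [EpiAux.pref_consW]
      refine ⟨(hfac _).mpr (hs.2 n a), by simp, ?_⟩
      intro v hv hvlen
      exact EpiAux.min_factor ha hs n ((hfac v).mp hv) hvlen
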